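/- If a > 0, c < 0, and b < sqrt(a * |c|), then the polynomial w(x) = (a + 2b - c) x^2 - 2(b - c) x - c has no roots in the open interval (0,1). -/
import Mathlib

/-- If `a > 0`, `c < 0` and `b < √(a|c|)`, then
`w(x) = (a + 2b - c) x² - 2(b - c) x - c` has no roots in `(0,1)`. -/
theorem no_interior_roots (a b c : ℝ)
    (ha : 0 < a) (hc : c < 0) (hb : b < Real.sqrt (a * |c|)) :
    ∀ x ∈ Set.Ioo (0:ℝ) 1,
      (a + 2 * b - c) * x ^ 2 - 2 * (b - c) * x - c ≠ 0 := by
  intro x hx hw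
  obtain ⟨hx0, hx1⟩ := hx
  have habs : |c| = -c := abs_of_neg hc
  rw [habs] at hb
  have hnc : (0:ℝ) < -c := by linarith
  have hs2 : Real.sqrt (a * -c) ^ 2 = a * -c :=
    Real.sq_sqrt (by positivity)
  have hsa : Real.sqrt a * Real.sqrt (-c) = Real.sqrt (a * -c) :=
    (Real.sqrt_mul ha.le _).symm
  have ha2 : Real.sqrt a ^ 2 = a := Real.sq_sqrt ha.le
  have hc2 : Real.sqrt (-c) ^ 2 = -c := Real.sq_sqrt hnc.le
  have hpos : 0 < (Real.sqrt (a * -c) - b) * (x * (1 - x)) :=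
    mul_pos (by linarith) (mul_pos hx0 (by linarith))
  nlinarith [sq_nonneg (Real.sqrt a * x - Real.sqrt (-c) * (1 - x)), hpos]
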